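/- Let r : [n] → ℝ₊ be positive reals with max_i r_i = r_max, and define G_k = Σ_{x ∈ S_{n,k}} Π_{j=1}^n r_j^{x_j} for k ≥ 0. Then for all m ≥ 1, r_max · G_{m-1} / G_m ≥ m/(m+n-1). -/
import Mathlib


open Finset

/-- Gordon-Newell ratio bound: with positive weights `r_1, …, r_n` and normalization
constants `G_k = Σ_{x ∈ S_{n,k}} Π_j r_j^{x_j}`, we have
`r_max · G_{m-1} / G_m ≥ m / (m + n - 1)` for all `m ≥ 1`. -/
theorem gordon_newell_ratio_bound (n m : ℕ) (hn : 1 ≤ n) (hm : 1 ≤ m)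
    (r : Fin n → ℝ) (hr : ∀ i, 0 < r i) :
    (Finset.univ.sup' ⟨⟨0, hn⟩, Finset.mem_univ _⟩ r) *
        (∑ x ∈ Finset.Nat.antidiagonalTuple n (m - 1), ∏ j, r j ^ x j) /
        (∑ x ∈ Finset.Nat.antidiagonalTuple n m, ∏ j, r j ^ x j)
      ≥ (m : ℝ) / ((m : ℝ) + n - 1) := by
  set R := Finset.univ.sup' ⟨⟨0, hn⟩, Finset.mem_univ _⟩ r with hR
  have hRle : ∀ i, r i ≤ R := fun i => Finset.le_sup' r (mem_univ i)
  have hRpos : 0 < R := lt_of_lt_of_le (hr ⟨0, hn⟩) (hRle _)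
  set Gm := ∑ x ∈ Finset.Nat.antidiagonalTuple n m, ∏ j, r j ^ x j with hGm
  set Gm1 := ∑ x ∈ Finset.Nat.antidiagonalTuple n (m - 1), ∏ j, r j ^ x j with hGm1
  have hprodpos : ∀ (x : Fin n → ℕ), 0 < ∏ j, r j ^ x j := fun x =>
    Finset.prod_pos fun j _ => pow_pos (hr j) _
  have hGmpos : 0 < Gm := by
    refine Finset.sum_pos (fun x _ => hprodpos x) ⟨Pi.single ⟨0, hn⟩ m, ?_⟩
    simp [Finset.Nat.mem_antidiagonalTuple, Finset.sum_pi_single']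
  have hGm1pos : 0 < Gm1 := by
    refine Finset.sum_pos (fun x _ => hprodpos x) ⟨Pi.single ⟨0, hn⟩ (m - 1), ?_⟩
    simp [Finset.Nat.mem_antidiagonalTuple, Finset.sum_pi_single']
  -- product over an updated tuple
  have hp : ∀ (y : Fin n → ℕ) (k : Fin n) (v : ℕ),
      ∏ j, r j ^ (Function.update y k v) j = r k ^ v * ∏ j ∈ univ.erase k, r j ^ y j := by
    intro y k v
    rw [← Finset.mul_prod_erase _ _ (mem_univ k), Function.update_self]
    congr 1
    refine Finset.prod_congr rfl fun j hj => ?_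
    rw [Function.update_of_ne (Finset.ne_of_mem_erase hj)]
  have hpself : ∀ (y : Fin n → ℕ) (k : Fin n),
      ∏ j, r j ^ y j = r k ^ y k * ∏ j ∈ univ.erase k, r j ^ y j := by
    intro y k
    rw [← Finset.mul_prod_erase _ _ (mem_univ k)]
  have key : (m : ℝ) * Gm ≤ R * ((m : ℝ) + n - 1) * Gm1 := by
    have step1 : (m : ℝ) * Gm
        = ∑ x ∈ Finset.Nat.antidiagonalTuple n m, ∑ i, (x i : ℝ) * ∏ j, r j ^ x j := by
      rw [hGm, Finset.mul_sum]
      refine Finset.sum_congr rfl fun x hx => ?_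
      rw [Finset.Nat.mem_antidiagonalTuple] at hx
      rw [← Finset.sum_mul]
      congr 1
      rw [← Nat.cast_sum, hx]
    have step2 : ∑ x ∈ Finset.Nat.antidiagonalTuple n m, ∑ i, (x i : ℝ) * ∏ j, r j ^ x j
        = ∑ y ∈ Finset.Nat.antidiagonalTuple n (m - 1),
            ∑ i, ((y i : ℝ) + 1) * r i * ∏ j, r j ^ y j := by
      rw [← Finset.sum_product', ← Finset.sum_product']
      rw [← Finset.sum_filter_of_ne
        (p := fun p : (Fin n → ℕ) × Fin n => p.1 p.2 ≠ 0)
        (f := fun p : (Fin n → ℕ) × Fin n => (p.1 p.2 : ℝ) * ∏ j, r j ^ p.1 j) ?_]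
      · refine Finset.sum_nbij'
          (i := fun p : (Fin n → ℕ) × Fin n => (Function.update p.1 p.2 (p.1 p.2 - 1), p.2))
          (j := fun p : (Fin n → ℕ) × Fin n => (Function.update p.1 p.2 (p.1 p.2 + 1), p.2))
          ?_ ?_ ?_ ?_ ?_
        · rintro ⟨x, k⟩ hx
          simp only [Finset.mem_filter, Finset.mem_product, Finset.Nat.mem_antidiagonalTuple] at hx ⊢
          obtain ⟨⟨hsum, -⟩, hne⟩ := hx
          refine ⟨?_, mem_univ _⟩
          rw [Finset.sum_update_of_mem (mem_univ k)]
          rw [← Finset.add_sum_erase _ _ (mem_univ k)] at hsum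
          simp only [Finset.sdiff_singleton_eq_erase]
          omega
        · rintro ⟨y, k⟩ hy
          simp only [Finset.mem_filter, Finset.mem_product, Finset.Nat.mem_antidiagonalTuple] at hy ⊢
          obtain ⟨hsum, -⟩ := hy
          refine ⟨⟨?_, mem_univ _⟩, ?_⟩
          · rw [Finset.sum_update_of_mem (mem_univ k)]
            rw [← Finset.add_sum_erase _ _ (mem_univ k)] at hsum
            simp only [Finset.sdiff_singleton_eq_erase]
            omega
          · simp [Function.update_self]
        · rintro ⟨x, k⟩ hx
          simp only [Finset.mem_filter] at hx
          have hne := hx.2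
          simp only
          rw [Function.update_idem, Function.update_self]
          have : x k - 1 + 1 = x k := by omega
          rw [this, Function.update_eq_self]
        · rintro ⟨y, k⟩ hy
          simp only
          rw [Function.update_idem, Function.update_self, Nat.add_sub_cancel,
            Function.update_eq_self]
        · rintro ⟨x, k⟩ hx
          simp only [Finset.mem_filter, Finset.mem_product] at hx
          have hne := hx.2
          simp only
          rw [Function.update_self, hp]
          rw [hpself x k]
          have hxk : x k = (x k - 1) + 1 := by omega
          rw [hxk, pow_succ]
          have hc : ((x k : ℕ) : ℝ) = ((x k - 1 : ℕ) : ℝ) + 1 := by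
            rw [Nat.cast_sub (by omega : 1 ≤ x k)]; ring
          rw [← hxk, hc]
          ring
      · rintro ⟨x, k⟩ hx hne
        simp only [ne_eq]
        intro h
        apply hne
        simp [h]
    have step3 : ∑ y ∈ Finset.Nat.antidiagonalTuple n (m - 1),
          ∑ i, ((y i : ℝ) + 1) * r i * ∏ j, r j ^ y j
        ≤ ∑ y ∈ Finset.Nat.antidiagonalTuple n (m - 1), R * ((m : ℝ) + n - 1) * ∏ j, r j ^ y j := by
      refine Finset.sum_le_sum fun y hy => ?_
      rw [Finset.Nat.mem_antidiagonalTuple] at hy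
      rw [← Finset.sum_mul]
      refine mul_le_mul_of_nonneg_right ?_ (le_of_lt (hprodpos y))
      have h1 : ∑ i, ((y i : ℝ) + 1) * r i ≤ ∑ i, ((y i : ℝ) + 1) * R := by
        refine Finset.sum_le_sum fun i _ => ?_
        refine mul_le_mul_of_nonneg_left (hRle i) (by positivity)
      refine h1.trans ?_
      rw [← Finset.sum_mul]
      have h2 : ∑ i, ((y i : ℝ) + 1) = (m : ℝ) + n - 1 := by
        rw [Finset.sum_add_distrib, ← Nat.cast_sum, hy]
        simp only [Finset.sum_const, Finset.card_univ, Fintype.card_fin, nsmul_eq_mul, mul_one]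
        have : ((m - 1 : ℕ) : ℝ) = (m : ℝ) - 1 := by
          rw [Nat.cast_sub hm]; simp
        rw [this]; ring
      rw [h2, mul_comm]
    rw [step1, step2]
    refine step3.trans ?_
    rw [← Finset.mul_sum, ← hGm1]
  have hm' : (1:ℝ) ≤ (m:ℝ) := by exact_mod_cast hm
  have hn' : (1:ℝ) ≤ (n:ℝ) := by exact_mod_cast hn
  rw [ge_iff_le, div_le_div_iff₀ (by linarith) hGmpos]
  nlinarith [key]
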